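/- arXiv:2103.15612 — 4 statements merged into one kernel-verified Lean document; each statement's English description precedes it below -/
import Mathlib

section
/- Let p > 2 be a real number and let a > 0, b ≥ 0, d ≥ 0 be constants. Let F₁ : ℝ → ℝ be convex and differentiable, let F₂ : ℝ → ℝ satisfy |F₂(s)| ≤ d(1 + s²) for all s ∈ ℝ, and suppose that F := F₁ + F₂ satisfies F(s) ≥ a|s|^p − b for all s ∈ ℝ. Then there exists a constant C ≥ 0 such that F₁′(s)·s ≥ (a/2)|s|^p − C for all s ∈ ℝ. -/
/-- Coercivity estimate for the convex part of the potential
(estimate (EST:F1P) of the paper). -/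
theorem stmt_0 (p a b d : ℝ) (hp : 2 < p) (ha : 0 < a) (hb : 0 ≤ b) (hd : 0 ≤ d)
    (F₁ F₂ : ℝ → ℝ) (hconv : ConvexOn ℝ Set.univ F₁) (hdiff : Differentiable ℝ F₁)
    (hF₂ : ∀ s : ℝ, |F₂ s| ≤ d * (1 + s ^ 2))
    (hF : ∀ s : ℝ, a * |s| ^ p - b ≤ F₁ s + F₂ s) :
    ∃ C : ℝ, 0 ≤ C ∧ ∀ s : ℝ, (a / 2) * |s| ^ p - C ≤ deriv F₁ s * s := by
  -- Step 1: convexity gradient inequality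
  have hgrad : ∀ s : ℝ, F₁ s - F₁ 0 ≤ deriv F₁ s * s := by
    intro s
    rcases lt_trichotomy s 0 with hs | hs | hs
    · have h := hconv.deriv_le_slope (Set.mem_univ s) (Set.mem_univ 0) hs (hdiff s)
      rw [slope_def_field] at h
      have hpos : (0 : ℝ) < 0 - s := by linarith
      have h2 := (le_div_iff₀ hpos).mp h
      nlinarith
    · simp [hs]
    · have h := hconv.slope_le_deriv (Set.mem_univ 0) (Set.mem_univ s) hs (hdiff s)
      rw [slope_def_field] at h
      have hpos : (0 : ℝ) < s - 0 := by linarith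
      have h2 := (div_le_iff₀ hpos).mp h
      nlinarith
  -- Step 2: lower bound on F₁
  have hF₁ : ∀ s : ℝ, a * |s| ^ p - b - d * (1 + s ^ 2) ≤ F₁ s := by
    intro s
    have h1 := hF s
    have h2 := (abs_le.mp (hF₂ s)).2
    linarith
  -- Step 3: absorb d * s ^ 2 into (a/2)|s|^p
  set T : ℝ := max 1 ((2 * d / a) ^ (1 / (p - 2))) with hT
  have hT1 : (1 : ℝ) ≤ T := le_max_left _ _
  have hT0 : (0 : ℝ) < T := lt_of_lt_of_le one_pos hT1
  have hp2 : 0 < p - 2 := by linarith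
  have habs : ∀ s : ℝ, d * s ^ 2 ≤ (a / 2) * |s| ^ p + d * T ^ 2 := by
    intro s
    rcases le_or_gt (|s|) T with h | h
    · have hs2 : s ^ 2 ≤ T ^ 2 := by
        rw [← sq_abs s]
        exact pow_le_pow_left₀ (abs_nonneg s) h 2
      have : d * s ^ 2 ≤ d * T ^ 2 := mul_le_mul_of_nonneg_left hs2 hd
      have hpos : 0 ≤ (a / 2) * |s| ^ p :=
        mul_nonneg (by linarith) (Real.rpow_nonneg (abs_nonneg s) p)
      linarith
    · have hs0 : (0 : ℝ) < |s| := lt_trans hT0 h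
      have hsplit : |s| ^ p = s ^ 2 * |s| ^ (p - 2) := by
        rw [← sq_abs s, ← Real.rpow_natCast |s| 2, ← Real.rpow_add hs0]
        norm_num
      have h2d0 : (0 : ℝ) ≤ 2 * d / a := by positivity
      have h2d : 2 * d / a ≤ |s| ^ (p - 2) := by
        have hTle : (2 * d / a) ^ (1 / (p - 2)) ≤ T := le_max_right _ _
        have hkey : ((2 * d / a) ^ (1 / (p - 2))) ^ (p - 2) = 2 * d / a := by
          rw [← Real.rpow_mul h2d0, one_div, inv_mul_cancel₀ (ne_of_gt hp2), Real.rpow_one]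
        calc 2 * d / a = ((2 * d / a) ^ (1 / (p - 2))) ^ (p - 2) := hkey.symm
          _ ≤ T ^ (p - 2) := Real.rpow_le_rpow (Real.rpow_nonneg h2d0 _) hTle (le_of_lt hp2)
          _ ≤ |s| ^ (p - 2) := Real.rpow_le_rpow (le_of_lt hT0) (le_of_lt h) (le_of_lt hp2)
      have hle : d ≤ (a / 2) * |s| ^ (p - 2) := by
        have := mul_le_mul_of_nonneg_left h2d (le_of_lt (half_pos ha))
        calc d = (a / 2) * (2 * d / a) := by field_simp
          _ ≤ (a / 2) * |s| ^ (p - 2) := this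
      have hmain : d * s ^ 2 ≤ (a / 2) * |s| ^ p := by
        rw [hsplit]
        calc d * s ^ 2 ≤ ((a / 2) * |s| ^ (p - 2)) * s ^ 2 :=
              mul_le_mul_of_nonneg_right hle (sq_nonneg s)
          _ = (a / 2) * (s ^ 2 * |s| ^ (p - 2)) := by ring
      have hTnn : 0 ≤ d * T ^ 2 := mul_nonneg hd (sq_nonneg T)
      linarith
  -- Conclusion
  refine ⟨b + d + d * T ^ 2 + |F₁ 0|, by positivity, fun s => ?_⟩
  have h1 := hgrad s
  have h2 := hF₁ s
  have h3 := habs s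
  have h4 : F₁ 0 ≤ |F₁ 0| := le_abs_self _
  linarith
end

section
/- Let C > 0 and K ≥ 0. Suppose y : [0,∞) → [0,∞) is continuous, differentiable on (0,∞), satisfies y′(τ) ≤ C·y(τ) for all τ > 0, and satisfies ∫₀^∞ y(τ) dτ ≤ K. Then for every t > 0 it holds that y(t) ≤ K·(C·t + 1)/t. -/
open MeasureTheory

/-- the time-weighted Gronwall-type argument behind the parabolic
smoothing property (estimates (est1)–(est:u*) in the proof of Theorem 3.1(v)). -/
theorem stmt_1 (C K : ℝ) (hC : 0 < C) (hK : 0 ≤ K) (y : ℝ → ℝ)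
    (hy_nonneg : ∀ t : ℝ, 0 ≤ t → 0 ≤ y t)
    (hy_cont : ContinuousOn y (Set.Ici 0))
    (hy_diff : ∀ τ : ℝ, 0 < τ → DifferentiableAt ℝ y τ)
    (hy_deriv : ∀ τ : ℝ, 0 < τ → deriv y τ ≤ C * y τ)
    (hy_int : ∫⁻ τ in Set.Ioi (0:ℝ), ENNReal.ofReal (y τ) ≤ ENNReal.ofReal K) :
    ∀ t : ℝ, 0 < t → y t ≤ K * (C * t + 1) / t := by
  intro t ht
  set h : ℝ → ℝ := fun τ => y τ * Real.exp (-(C * τ)) with hh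
  -- h is antitone on (0, ∞), via deriv ≤ 0 on each [s, t]
  have hderiv : ∀ τ : ℝ, 0 < τ →
      HasDerivAt h (deriv y τ * Real.exp (-(C * τ)) + y τ * (Real.exp (-(C * τ)) * (-C))) τ := by
    intro τ hτ
    have h1 : HasDerivAt y (deriv y τ) τ := (hy_diff τ hτ).hasDerivAt
    have h2 : HasDerivAt (fun τ : ℝ => Real.exp (-(C * τ))) (Real.exp (-(C * τ)) * (-C)) τ := by
      have : HasDerivAt (fun τ : ℝ => -(C * τ)) (-C) τ := by
        simpa using ((hasDerivAt_id τ).const_mul C).fun_neg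
      simpa using this.exp
    exact h1.mul h2
  have hgron : ∀ s : ℝ, 0 < s → s ≤ t → h t ≤ h s := by
    intro s hs hst
    have hanti : AntitoneOn h (Set.Icc s t) := by
      apply antitoneOn_of_deriv_nonpos (convex_Icc s t)
      · apply ContinuousOn.mul
        · exact hy_cont.mono (fun x hx => le_trans hs.le hx.1)
        · exact (Real.continuous_exp.comp (continuous_const.mul continuous_id).neg).continuousOn
      · intro x hx
        rw [interior_Icc] at hx
        exact ((hderiv x (hs.trans hx.1)).differentiableAt).differentiableWithinAt
      · intro x hx
        rw [interior_Icc] at hx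
        have hx0 : 0 < x := hs.trans hx.1
        rw [(hderiv x hx0).deriv]
        have := hy_deriv x hx0
        have hy0 := hy_nonneg x hx0.le
        have he : 0 < Real.exp (-(C * x)) := Real.exp_pos _
        nlinarith
    exact hanti (Set.left_mem_Icc.2 hst) (Set.right_mem_Icc.2 hst) hst
  -- lower bound for y s on (0,t)
  have hlow : ∀ s ∈ Set.Ioo (0:ℝ) t, y t * Real.exp (C * s - C * t) ≤ y s := by
    intro s hs
    have := hgron s hs.1 hs.2.le
    simp only [hh] at this
    have he : 0 < Real.exp (-(C * s)) := Real.exp_pos _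
    have : y t * Real.exp (-(C * t)) * Real.exp (C * s) ≤ y s * Real.exp (-(C * s)) * Real.exp (C * s) := by
      exact mul_le_mul_of_nonneg_right this (Real.exp_pos _).le
    rw [mul_assoc, mul_assoc, ← Real.exp_add, ← Real.exp_add] at this
    simpa [sub_eq_add_neg, add_comm, mul_comm] using this
  -- integral of the lower bound
  set f : ℝ → ℝ := fun s => y t * Real.exp (C * s - C * t) with hf
  have hfc : Continuous f :=
    continuous_const.mul ((continuous_const.mul continuous_id).sub continuous_const).rexp
  have hfint : IntegrableOn f (Set.Ioo 0 t) :=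
    (hfc.continuousOn.integrableOn_compact isCompact_Icc).mono_set Set.Ioo_subset_Icc_self
  have hfnn : ∀ s, 0 ≤ f s := fun s =>
    mul_nonneg (hy_nonneg t ht.le) (Real.exp_pos _).le
  have key : ENNReal.ofReal (∫ s in Set.Ioo (0:ℝ) t, f s) ≤ ENNReal.ofReal K := by
    rw [ofReal_integral_eq_lintegral_ofReal hfint (Filter.Eventually.of_forall hfnn)]
    calc ∫⁻ s in Set.Ioo (0:ℝ) t, ENNReal.ofReal (f s)
        ≤ ∫⁻ s in Set.Ioo (0:ℝ) t, ENNReal.ofReal (y s) := by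
          apply setLIntegral_mono' measurableSet_Ioo
          intro s hs
          exact ENNReal.ofReal_le_ofReal (hlow s hs)
      _ ≤ ∫⁻ s in Set.Ioi (0:ℝ), ENNReal.ofReal (y s) :=
          lintegral_mono_set (fun s hs => hs.1)
      _ ≤ ENNReal.ofReal K := hy_int
  -- compute the integral
  have hcomp : ∫ s in Set.Ioo (0:ℝ) t, f s = y t * ((1 - Real.exp (-(C * t))) / C) := by
    rw [← MeasureTheory.integral_Ioc_eq_integral_Ioo, ← intervalIntegral.integral_of_le ht.le]
    have : ∀ s ∈ Set.uIcc (0:ℝ) t, HasDerivAt (fun s => y t * (Real.exp (C * s - C * t) / C)) (f s) s := by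
      intro s _
      have h1 : HasDerivAt (fun s : ℝ => C * s - C * t) C s := by
        simpa using ((hasDerivAt_id s).const_mul C).sub_const (C * t)
      have h2 := h1.exp
      have h3 := (h2.div_const C).const_mul (y t)
      rw [mul_div_cancel_right₀ _ hC.ne'] at h3
      exact h3
    rw [intervalIntegral.integral_eq_sub_of_hasDerivAt this (hfc.intervalIntegrable 0 t)]
    simp [mul_div_assoc, mul_sub, sub_div]
  rw [hcomp] at key
  have key2 : y t * ((1 - Real.exp (-(C * t))) / C) ≤ K :=
    (ENNReal.ofReal_le_ofReal_iff hK).1 key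
  -- final algebra
  set E := Real.exp (-(C * t)) with hE
  have hE0 : 0 < E := Real.exp_pos _
  have hEb : E * (C * t + 1) ≤ 1 := by
    have h1 : C * t + 1 ≤ Real.exp (C * t) := by
      simpa [add_comm] using Real.add_one_le_exp (C * t)
    have h2 : E * Real.exp (C * t) = 1 := by
      rw [hE, ← Real.exp_add]; simp
    nlinarith
  have hy0 := hy_nonneg t ht.le
  have key3 : y t * (1 - E) ≤ K * C := by
    rw [mul_div_assoc', div_le_iff₀ hC] at key2
    linarith
  rw [le_div_iff₀ ht]
  nlinarith [mul_le_mul_of_nonneg_right key3 (show (0:ℝ) ≤ C * t + 1 by positivity),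
    mul_le_mul_of_nonneg_left hEb hy0]
end

section
/- Let (X,d) be a metric space and let ρ be a pseudometric on X. Let {S(t)}_{t≥0} be a semigroup on X, let T₀ > 0, and let K ⊆ X be nonempty with S(t)(K) ⊆ K for all t ≥ T₀. Let M_D ⊆ K be nonempty and set M := ⋃_{s∈[T₀,2T₀]} S(s)(M_D). Assume: (i) there exist c, a > 0 such that inf_{y∈M_D} ρ(S(nT₀)x, y) ≤ c·e^{−a·n} for all n ∈ ℕ₀ and all x ∈ K; (ii) there exists Λ > 0 such that d(S(s)x, S(s)y) ≤ Λ·ρ(x,y) for all s ∈ [T₀, 2T₀] and all x, y ∈ K; (iii) the set (⋃_{t∈[0,2T₀]} S(t)(K)) ∪ M is bounded in (X,d). Then there exist constants C > 0 and α > 0 such that sup_{x∈K} inf_{z∈M} d(S(t)x, z) ≤ C·e^{−α·t} for all t ≥ 0. -/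
/-- A semigroup `{S(t)}_{t ≥ 0}` on `X`: `S 0 = id` and `S (t+s) = S t ∘ S s`
for all `s, t ≥ 0`. -/
def IsSemigroup {X : Type*} (S : ℝ → X → X) : Prop :=
  S 0 = id ∧ ∀ t s : ℝ, 0 ≤ t → 0 ≤ s → S (t + s) = S t ∘ S s

/-- A pseudometric on `X`: nonnegative, vanishing on the diagonal, symmetric,
and satisfying the triangle inequality. -/
def IsPseudometric {X : Type*} (ρ : X → X → ℝ) : Prop :=
  (∀ x y : X, 0 ≤ ρ x y) ∧ (∀ x : X, ρ x x = 0) ∧ (∀ x y : X, ρ x y = ρ y x) ∧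
    (∀ x y z : X, ρ x z ≤ ρ x y + ρ y z)

/-- upgrading discrete-time exponential attraction in a weaker
pseudometric `ρ` to continuous-time exponential attraction in the metric of
`X`, via a uniform Lipschitz smoothing estimate (part (c) of the final theorem
of Section 6 of the paper). -/
theorem stmt_11 {X : Type*} [MetricSpace X] (ρ : X → X → ℝ)
    (hρ : IsPseudometric ρ)
    (S : ℝ → X → X) (hS : IsSemigroup S)
    (T₀ : ℝ) (hT₀ : 0 < T₀)
    (K : Set X) (hK : K.Nonempty) (hKinv : ∀ t : ℝ, T₀ ≤ t → S t '' K ⊆ K)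
    (MD : Set X) (hMD : MD.Nonempty) (hMDK : MD ⊆ K)
    (M : Set X) (hM : M = ⋃ s ∈ Set.Icc T₀ (2 * T₀), S s '' MD)
    (c a : ℝ) (hc : 0 < c) (ha : 0 < a)
    (hattr : ∀ n : ℕ, ∀ x ∈ K,
      (⨅ y : MD, ρ (S ((n : ℝ) * T₀) x) y) ≤ c * Real.exp (-a * n))
    (Lam : ℝ) (hLam : 0 < Lam)
    (hLip : ∀ s ∈ Set.Icc T₀ (2 * T₀), ∀ x ∈ K, ∀ y ∈ K,
      dist (S s x) (S s y) ≤ Lam * ρ x y)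
    (hbdd : Bornology.IsBounded ((⋃ t ∈ Set.Icc (0:ℝ) (2 * T₀), S t '' K) ∪ M)) :
    ∃ C α : ℝ, 0 < C ∧ 0 < α ∧ ∀ t : ℝ, 0 ≤ t → ∀ x ∈ K,
      Metric.infDist (S t x) M ≤ C * Real.exp (-α * t) := by
  obtain ⟨hS0, hSadd⟩ := hS
  haveI : Nonempty MD := hMD.to_subtype
  have hT₀le : T₀ ≤ 2 * T₀ := by linarith
  obtain ⟨y₀, hy₀⟩ := hMD
  have hMne : (S T₀ y₀) ∈ M := by
    rw [hM]
    exact Set.mem_biUnion ⟨le_refl _, hT₀le⟩ ⟨y₀, hy₀, rfl⟩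
  obtain ⟨D, hD⟩ := Metric.isBounded_iff.mp hbdd
  set B : ℝ := max (Lam * c) (max D 1) with hB
  have hB1 : 1 ≤ B := le_max_of_le_right (le_max_right D 1)
  have hBpos : 0 < B := lt_of_lt_of_le one_pos hB1
  set α : ℝ := a / T₀ with hα
  have hαpos : 0 < α := div_pos ha hT₀
  refine ⟨B * Real.exp (2 * a), α, by positivity, hαpos, ?_⟩
  intro t ht x hx
  by_cases h2 : 2 * T₀ ≤ t
  · -- large time
    have htT : (2 : ℝ) ≤ t / T₀ := by rw [le_div_iff₀ hT₀]; linarith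
    set m : ℕ := (⌊t / T₀⌋).toNat with hmdef
    have hfl : (2 : ℤ) ≤ ⌊t / T₀⌋ := Int.le_floor.mpr (by exact_mod_cast htT)
    have hm2 : 2 ≤ m := by omega
    have hmcastval : ((m : ℕ) : ℝ) = ((⌊t / T₀⌋ : ℤ) : ℝ) := by
      rw [hmdef]; exact_mod_cast Int.toNat_of_nonneg (by omega)
    have hmle : (m : ℝ) ≤ t / T₀ := by rw [hmcastval]; exact Int.floor_le _
    have hmlt : t / T₀ < (m : ℝ) + 1 := by rw [hmcastval]; exact Int.lt_floor_add_one _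
    set n : ℕ := m - 1 with hndef
    have hncast : (n : ℝ) = (m : ℝ) - 1 := by
      rw [hndef]; push_cast [Nat.cast_sub (by omega : 1 ≤ m)]; ring
    have hn1 : (1 : ℝ) ≤ (n : ℝ) := by
      rw [hncast]
      have : (2:ℝ) ≤ m := by exact_mod_cast hm2
      linarith
    set s : ℝ := t - (n : ℝ) * T₀ with hsdef
    have hmT : (m : ℝ) * T₀ ≤ t := by
      rw [← div_mul_cancel₀ t hT₀.ne']
      exact mul_le_mul_of_nonneg_right hmle hT₀.le
    have htmT : t < ((m : ℝ) + 1) * T₀ := by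
      rw [← div_mul_cancel₀ t hT₀.ne']
      exact mul_lt_mul_of_pos_right hmlt hT₀
    have hs1 : T₀ ≤ s := by rw [hsdef, hncast]; nlinarith
    have hs2 : s ≤ 2 * T₀ := by rw [hsdef, hncast]; nlinarith
    have hnT0 : (0 : ℝ) ≤ (n : ℝ) * T₀ := by positivity
    have hdecomp : S t x = S s (S ((n : ℝ) * T₀) x) := by
      have ht' : t = s + (n : ℝ) * T₀ := by rw [hsdef]; ring
      rw [ht', hSadd s ((n : ℝ) * T₀) (le_trans hT₀.le hs1) hnT0]
      rfl
    have hz : S ((n : ℝ) * T₀) x ∈ K := by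
      apply hKinv ((n : ℝ) * T₀) (by nlinarith)
      exact ⟨x, hx, rfl⟩
    set z := S ((n : ℝ) * T₀) x with hzdef
    have key : Metric.infDist (S t x) M ≤ Lam * (⨅ y : MD, ρ z y) := by
      have hle : ∀ y : MD, Metric.infDist (S t x) M / Lam ≤ ρ z y := by
        intro y
        have hyM : S s (y : X) ∈ M := by
          rw [hM]; exact Set.mem_biUnion ⟨hs1, hs2⟩ ⟨y, y.2, rfl⟩
        have h1 : Metric.infDist (S t x) M ≤ dist (S s z) (S s y) := by
          rw [hdecomp]; exact Metric.infDist_le_dist_of_mem hyM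
        have h2 : dist (S s z) (S s y) ≤ Lam * ρ z y :=
          hLip s ⟨hs1, hs2⟩ z hz y (hMDK y.2)
        rw [div_le_iff₀ hLam]
        calc Metric.infDist (S t x) M ≤ Lam * ρ z y := h1.trans h2
          _ = ρ z y * Lam := mul_comm _ _
      have := le_ciInf hle
      rw [div_le_iff₀ hLam] at this
      linarith [this]
    have hexp : Real.exp (-a * n) ≤ Real.exp (2 * a) * Real.exp (-α * t) := by
      rw [← Real.exp_add]
      apply Real.exp_le_exp.mpr
      have hαt : α * t ≤ a * ((n : ℝ) + 2) := by
        rw [hα, hncast]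
        rw [div_mul_eq_mul_div, div_le_iff₀ hT₀]
        nlinarith
      nlinarith
    calc Metric.infDist (S t x) M ≤ Lam * (⨅ y : MD, ρ z y) := key
      _ ≤ Lam * (c * Real.exp (-a * n)) :=
          mul_le_mul_of_nonneg_left (hattr n x hx) hLam.le
      _ = (Lam * c) * Real.exp (-a * n) := by ring
      _ ≤ B * (Real.exp (2 * a) * Real.exp (-α * t)) := by
          apply mul_le_mul (le_max_left _ _) hexp (Real.exp_nonneg _)
          exact hBpos.le
      _ = B * Real.exp (2 * a) * Real.exp (-α * t) := by ring
  · -- small time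
    push_neg at h2
    have hmem1 : S t x ∈ (⋃ t ∈ Set.Icc (0:ℝ) (2 * T₀), S t '' K) ∪ M :=
      Set.mem_union_left _ (Set.mem_biUnion ⟨ht, h2.le⟩ ⟨x, hx, rfl⟩)
    have hmem2 : S T₀ y₀ ∈ (⋃ t ∈ Set.Icc (0:ℝ) (2 * T₀), S t '' K) ∪ M :=
      Set.mem_union_right _ hMne
    have hDd : Metric.infDist (S t x) M ≤ D :=
      le_trans (Metric.infDist_le_dist_of_mem hMne) (hD hmem1 hmem2)
    have h1 : D ≤ B := le_max_of_le_right (le_max_left D 1)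
    have hexp1 : (1 : ℝ) ≤ Real.exp (2 * a) * Real.exp (-α * t) := by
      rw [← Real.exp_add]
      apply Real.one_le_exp
      have : α * t ≤ 2 * a := by
        rw [hα, div_mul_eq_mul_div, div_le_iff₀ hT₀]
        nlinarith
      nlinarith
    calc Metric.infDist (S t x) M ≤ D := hDd
      _ ≤ B := h1
      _ ≤ B * (Real.exp (2 * a) * Real.exp (-α * t)) :=
          le_mul_of_one_le_right hBpos.le hexp1
      _ = B * Real.exp (2 * a) * Real.exp (-α * t) := by ring
end

section
/- Let (X,d) be a metric space, let ρ be a pseudometric on X, let K ⊆ X, let T₀ > 0 and L* > 0. For each L ∈ [0,L*], let S^L(t) : K → X be given maps for t ∈ [T₀, 2T₀], let M_D^L ⊆ K be nonempty, and set M^L := ⋃_{t∈[T₀,2T₀]} S^L(t)(M_D^L). Assume: (i) there exist c > 0 and δ > 0 such that the symmetric Hausdorff distance with respect to ρ satisfies dist_{sym,ρ}(M_D^L, M_D^0) ≤ c·L^δ for all L ∈ [0,L*]; (ii) there exists Λ > 0 such that d(S^L(t)x, S^L(t)y) ≤ Λ·ρ(x,y) for all L ∈ [0,L*], t ∈ [T₀,2T₀]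 and x, y ∈ K; (iii) there exist C₀ > 0 and κ > 0 such that d(S^L(t)x, S^0(t)x) ≤ C₀·L^κ for all L ∈ [0,L*], t ∈ [T₀,2T₀] and x ∈ K. Then for all L ∈ [0,L*] one has dist_{sym,d}(M^L, M^0) ≤ (C₀ + Λ·c)·(L^κ + L^δ). -/
/-- robustness transfer (part (b) of the final theorem of
Section 6 of the paper). Closeness of the discrete attractors `M_D^L` in the
weak pseudometric `ρ`, uniform Lipschitz smoothing of the semigroups from `ρ`
into the metric `d`, and the convergence rate `d(S^L(t)x, S^0(t)x) ≤ C₀ L^κ`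
yield closeness of `M^L := ⋃_{t∈[T₀,2T₀]} S^L(t) M_D^L` and `M^0` in `d`.
The (symmetric) Hausdorff (semi)distance bounds are expressed equivalently in
the pointwise form `sup-inf ≤ c ↔ ∀ point, inf ≤ c`. -/
theorem stmt_12 {X : Type*} [MetricSpace X] (ρ : X → X → ℝ)
    (hρ : IsPseudometric ρ)
    (K : Set X) (T₀ Lstar : ℝ) (hT₀ : 0 < T₀) (hLstar : 0 < Lstar)
    (S : ℝ → ℝ → X → X)
    (MD : ℝ → Set X) (hMDne : ∀ L ∈ Set.Icc (0:ℝ) Lstar, (MD L).Nonempty)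
    (hMDK : ∀ L ∈ Set.Icc (0:ℝ) Lstar, MD L ⊆ K)
    (M : ℝ → Set X)
    (hM : ∀ L ∈ Set.Icc (0:ℝ) Lstar,
      M L = ⋃ t ∈ Set.Icc T₀ (2 * T₀), S L t '' MD L)
    (c δ : ℝ) (hc : 0 < c) (hδ : 0 < δ)
    (hclose₁ : ∀ L ∈ Set.Icc (0:ℝ) Lstar, ∀ x ∈ MD L,
      (⨅ y : MD 0, ρ x y) ≤ c * L ^ δ)
    (hclose₂ : ∀ L ∈ Set.Icc (0:ℝ) Lstar, ∀ y ∈ MD 0,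
      (⨅ x : MD L, ρ y x) ≤ c * L ^ δ)
    (Lam : ℝ) (hLam : 0 < Lam)
    (hLip : ∀ L ∈ Set.Icc (0:ℝ) Lstar, ∀ t ∈ Set.Icc T₀ (2 * T₀), ∀ x ∈ K, ∀ y ∈ K,
      dist (S L t x) (S L t y) ≤ Lam * ρ x y)
    (C₀ κ : ℝ) (hC₀ : 0 < C₀) (hκ : 0 < κ)
    (hconv : ∀ L ∈ Set.Icc (0:ℝ) Lstar, ∀ t ∈ Set.Icc T₀ (2 * T₀), ∀ x ∈ K,
      dist (S L t x) (S 0 t x) ≤ C₀ * L ^ κ) :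
    ∀ L ∈ Set.Icc (0:ℝ) Lstar,
      (∀ u ∈ M L, Metric.infDist u (M 0) ≤ (C₀ + Lam * c) * (L ^ κ + L ^ δ)) ∧
      (∀ u ∈ M 0, Metric.infDist u (M L) ≤ (C₀ + Lam * c) * (L ^ κ + L ^ δ)) := by

  intro L hL
  have h0 : (0:ℝ) ∈ Set.Icc (0:ℝ) Lstar := ⟨le_refl 0, hLstar.le⟩
  obtain ⟨hρ0, hρdiag, hρsymm, hρtri⟩ := hρ
  have hL0 : 0 ≤ L := hL.1
  have hκ0 : (0:ℝ) ≤ L ^ κ := Real.rpow_nonneg hL0 κ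
  have hδ0 : (0:ℝ) ≤ L ^ δ := Real.rpow_nonneg hL0 δ
  have hbound : C₀ * L ^ κ + Lam * (c * L ^ δ) ≤ (C₀ + Lam * c) * (L ^ κ + L ^ δ) := by
    nlinarith [mul_pos hLam hc]
  constructor
  · intro u hu
    rw [hM L hL] at hu
    simp only [Set.mem_iUnion, Set.mem_image] at hu
    obtain ⟨t, ht, x, hx, rfl⟩ := hu
    have hxK : x ∈ K := hMDK L hL hx
    refine le_trans (le_of_forall_pos_le_add ?_) hbound
    intro ε hε
    haveI : Nonempty (MD 0) := (hMDne 0 h0).to_subtype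
    have hinf : (⨅ y : MD 0, ρ x y) < c * L ^ δ + ε / Lam :=
      lt_of_le_of_lt (hclose₁ L hL x hx) (by linarith [div_pos hε hLam])
    obtain ⟨⟨y, hy⟩, hyρ⟩ := exists_lt_of_ciInf_lt hinf
    have hyK : y ∈ K := hMDK 0 h0 hy
    have hmem : S 0 t y ∈ M 0 := by
      rw [hM 0 h0]
      simp only [Set.mem_iUnion, Set.mem_image]
      exact ⟨t, ht, y, hy, rfl⟩
    calc Metric.infDist (S L t x) (M 0) ≤ dist (S L t x) (S 0 t y) :=
          Metric.infDist_le_dist_of_mem hmem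
      _ ≤ dist (S L t x) (S 0 t x) + dist (S 0 t x) (S 0 t y) := dist_triangle _ _ _
      _ ≤ C₀ * L ^ κ + Lam * ρ x y := by
          gcongr
          · exact hconv L hL t ht x hxK
          · exact hLip 0 h0 t ht x hxK y hyK
      _ ≤ C₀ * L ^ κ + Lam * (c * L ^ δ + ε / Lam) := by
          gcongr
      _ = C₀ * L ^ κ + Lam * (c * L ^ δ) + ε := by
          field_simp
          ring
  · intro u hu
    rw [hM 0 h0] at hu
    simp only [Set.mem_iUnion, Set.mem_image] at hu
    obtain ⟨t, ht, y, hy, rfl⟩ := hu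
    have hyK : y ∈ K := hMDK 0 h0 hy
    refine le_trans (le_of_forall_pos_le_add ?_) hbound
    intro ε hε
    haveI : Nonempty (MD L) := (hMDne L hL).to_subtype
    have hinf : (⨅ x : MD L, ρ y x) < c * L ^ δ + ε / Lam :=
      lt_of_le_of_lt (hclose₂ L hL y hy) (by linarith [div_pos hε hLam])
    obtain ⟨⟨x, hx⟩, hxρ⟩ := exists_lt_of_ciInf_lt hinf
    have hxK : x ∈ K := hMDK L hL hx
    have hmem : S L t x ∈ M L := by
      rw [hM L hL]
      simp only [Set.mem_iUnion, Set.mem_image]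
      exact ⟨t, ht, x, hx, rfl⟩
    calc Metric.infDist (S 0 t y) (M L) ≤ dist (S 0 t y) (S L t x) :=
          Metric.infDist_le_dist_of_mem hmem
      _ ≤ dist (S 0 t y) (S L t y) + dist (S L t y) (S L t x) := dist_triangle _ _ _
      _ ≤ C₀ * L ^ κ + Lam * ρ y x := by
          gcongr
          · rw [dist_comm]; exact hconv L hL t ht y hyK
          · exact hLip L hL t ht y hyK x hxK
      _ ≤ C₀ * L ^ κ + Lam * (c * L ^ δ + ε / Lam) := by
          gcongr
      _ = C₀ * L ^ κ + Lam * (c * L ^ δ) + ε := by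
          field_simp
          ring
end
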